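/- The Golomb space ℕ⁺ with the relatively prime integer topology is superconnected: for any nonempty open sets U₁,…,Uₙ, the intersection of their closures is nonempty. -/

import Mathlib

/-- The base of the Golomb topology: arithmetic progressions `{a + b*n : n ≥ 0}`
with coprime `a, b ≥ 1`, viewed inside the positive integers. -/
def golombBasis : Set (Set ℕ+) :=
  {S | ∃ a b : ℕ, 1 ≤ a ∧ 1 ≤ b ∧ Nat.Coprime a b ∧
    S = {x : ℕ+ | ∃ n : ℕ, (x : ℕ) = a + b * n}}

/-- The Golomb (relatively prime integer) topology on `ℕ+`. -/
instance golombTopology : TopologicalSpace ℕ+ :=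
  TopologicalSpace.generateFrom golombBasis

/-- Every open set of the Golomb topology contains, around each of its points, a basic
arithmetic progression. -/
lemma golomb_exists_basic {U : Set ℕ+} (hU : TopologicalSpace.GenerateOpen golombBasis U) :
    ∀ x ∈ U, ∃ a b : ℕ, 1 ≤ a ∧ 1 ≤ b ∧ Nat.Coprime a b ∧
      (∃ n : ℕ, (x : ℕ) = a + b * n) ∧ {y : ℕ+ | ∃ n : ℕ, (y : ℕ) = a + b * n} ⊆ U := by
  induction hU with
  | basic s hs =>
    rintro x hx
    obtain ⟨a, b, ha, hb, hcop, rfl⟩ := hs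
    exact ⟨a, b, ha, hb, hcop, hx, le_refl _⟩
  | univ =>
    intro x _
    exact ⟨x, 1, x.one_le, le_refl 1, Nat.coprime_one_right _, ⟨0, by ring⟩,
      Set.subset_univ _⟩
  | inter s t _ _ ihs iht =>
    rintro x ⟨hxs, hxt⟩
    obtain ⟨a₁, b₁, ha₁, hb₁, hc₁, ⟨n₁, hn₁⟩, hsub₁⟩ := ihs x hxs
    obtain ⟨a₂, b₂, ha₂, hb₂, hc₂, ⟨n₂, hn₂⟩, hsub₂⟩ := iht x hxt
    have hx1 : Nat.Coprime (x : ℕ) b₁ := by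
      rw [hn₁, Nat.coprime_add_mul_left_left]; exact hc₁
    have hx2 : Nat.Coprime (x : ℕ) b₂ := by
      rw [hn₂, Nat.coprime_add_mul_left_left]; exact hc₂
    refine ⟨x, b₁ * b₂, x.one_le, Nat.mul_pos hb₁ hb₂, hx1.mul_right hx2, ⟨0, by ring⟩, ?_⟩
    rintro y ⟨m, hm⟩
    constructor
    · exact hsub₁ ⟨n₁ + b₂ * m, by rw [hm, hn₁]; ring⟩
    · exact hsub₂ ⟨n₂ + b₁ * m, by rw [hm, hn₂]; ring⟩
  | sUnion S _ ih =>
    rintro x ⟨s, hs, hxs⟩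
    obtain ⟨a, b, ha, hb, hc, hmem, hsub⟩ := ih s hs x hxs
    exact ⟨a, b, ha, hb, hc, hmem, hsub.trans (Set.subset_sUnion_of_mem hs)⟩

/-- Every positive multiple of `b` is in the closure of the progression `a + b*ℕ`. -/
lemma golomb_mul_mem_closure {a b : ℕ} (ha : 1 ≤ a) (hb : 1 ≤ b)
    (hcop : Nat.Coprime a b) (x : ℕ+) (hdvd : b ∣ (x : ℕ)) :
    x ∈ closure {y : ℕ+ | ∃ n : ℕ, (y : ℕ) = a + b * n} := by
  rw [mem_closure_iff]
  intro V hV hxV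
  obtain ⟨c, d, hc, hd, hccop, ⟨m, hm⟩, hsub⟩ := golomb_exists_basic hV x hxV
  have hxd : Nat.Coprime (x : ℕ) d := by
    rw [hm, Nat.coprime_add_mul_left_left]; exact hccop
  have hbd : Nat.Coprime b d := Nat.Coprime.coprime_dvd_left hdvd hxd
  obtain ⟨z, hz1, hz2⟩ := Nat.chineseRemainder hbd a c
  set y : ℕ := z + b * d * (a + c + 1) with hy
  have hy1 : y ≡ a [MOD b] := by
    have : y % b = z % b := by
      rw [hy, show b * d * (a + c + 1) = b * (d * (a + c + 1)) by ring,
        Nat.add_mul_mod_self_left]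
    exact this.trans hz1
  have hy2 : y ≡ c [MOD d] := by
    have : y % d = z % d := by
      rw [hy, show b * d * (a + c + 1) = d * (b * (a + c + 1)) by ring,
        Nat.add_mul_mod_self_left]
    exact this.trans hz2
  have hbd1 : 1 ≤ b * d := Nat.mul_pos hb hd
  have key : a + c + 1 ≤ b * d * (a + c + 1) := Nat.le_mul_of_pos_left _ hbd1
  have hya : a ≤ y := by rw [hy]; omega
  have hyc : c ≤ y := by rw [hy]; omega
  obtain ⟨n₁, hn₁⟩ := (Nat.modEq_iff_dvd' hya).mp hy1.symm
  obtain ⟨n₂, hn₂⟩ := (Nat.modEq_iff_dvd' hyc).mp hy2.symm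
  refine ⟨⟨y, by omega⟩, hsub ⟨n₂, by simp; omega⟩, ⟨n₁, by simp; omega⟩⟩

def Superconnected (X : Type*) [TopologicalSpace X] : Prop :=
  ∀ (n : ℕ) (U : Fin n → Set X), (∀ i, IsOpen (U i)) → (∀ i, (U i).Nonempty) →
    (⋂ i, closure (U i)).Nonempty

theorem golomb_superconnected : Superconnected ℕ+ := by
  intro n U hopen hne
  choose x hx using hne
  have h := fun i => golomb_exists_basic (hopen i) (x i) (hx i)
  choose a b ha hb hcop hmem hsub using h
  refine ⟨⟨∏ i, b i, ?_⟩, ?_⟩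
  · exact Finset.prod_pos fun i _ => hb i
  · refine Set.mem_iInter.mpr ?_
    intro i
    refine closure_mono (hsub i) (golomb_mul_mem_closure (ha i) (hb i) (hcop i) _ ?_)
    exact Finset.dvd_prod_of_mem b (Finset.mem_univ i)
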